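/- The ratio of the HTHS marginal density to the HS marginal density of γ tends to infinity both as γ → 0⁺ and as γ → ∞: with f_HTHS(γ) = 1/(γ((log γ)² + π²)) and f_HS(γ) = γ^{−1/2}/(π(1+γ)), we have f_HTHS(γ)/f_HS(γ) → ∞ as γ → 0⁺ and as γ → ∞. -/

import Mathlib

open Real MeasureTheory Filter
open Topology

/-- The HTHS marginal density of γ. -/
noncomputable def fHTHS (γ : ℝ) : ℝ := 1 / (γ * ((Real.log γ)^2 + π^2))

/-- The Horseshoe marginal density of γ. -/
noncomputable def fHS (γ : ℝ) : ℝ := γ ^ (-(1:ℝ)/2) / (π * (1 + γ))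

lemma ratio_eq {x : ℝ} (hx : 0 < x) :
    fHTHS x / fHS x = π * (1 + x) / (x ^ ((1:ℝ)/2) * ((Real.log x)^2 + π^2)) := by
  have hπ : (0:ℝ) < π := Real.pi_pos
  have hD : (0:ℝ) < (Real.log x)^2 + π^2 := by positivity
  have h1x : (0:ℝ) < 1 + x := by linarith
  have hrp : (0:ℝ) < x ^ ((1:ℝ)/2) := Real.rpow_pos_of_pos hx _
  have hneg : x ^ (-(1:ℝ)/2) = (x ^ ((1:ℝ)/2))⁻¹ := by
    rw [neg_div, Real.rpow_neg hx.le]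
  have hx2 : x ^ ((1:ℝ)/2) * x ^ ((1:ℝ)/2) = x := by
    rw [← Real.rpow_add hx]; norm_num
  unfold fHTHS fHS
  rw [hneg]
  field_simp
  ring_nf
  have hsq : (x ^ ((1:ℝ)/2))^2 = x := by rw [sq]; exact hx2
  rw [hsq]

/-- The ratio of HTHS to HS marginal densities of γ tends to ∞ at the origin
and in the tail. -/
theorem hths_hs_ratio_diverges :
    Filter.Tendsto (fun γ => fHTHS γ / fHS γ) (nhdsWithin 0 (Set.Ioi (0:ℝ))) Filter.atTop ∧
    Filter.Tendsto (fun γ => fHTHS γ / fHS γ) Filter.atTop Filter.atTop := by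
  have hπ : (0:ℝ) < π := Real.pi_pos
  constructor
  · -- at 0⁺
    -- denominator tends to 0 within Ioi 0
    have h1 : Tendsto (fun x : ℝ => (Real.log x * x ^ ((1:ℝ)/4))^2) (𝓝[>] 0) (𝓝 0) := by
      have := tendsto_log_mul_rpow_nhdsGT_zero (r := 1/4) (by norm_num)
      simpa [sq] using this.mul this
    have h2 : Tendsto (fun x : ℝ => π^2 * x ^ ((1:ℝ)/2)) (𝓝[>] 0) (𝓝 0) := by
      have hc : Tendsto (fun x : ℝ => x ^ ((1:ℝ)/2)) (𝓝 (0:ℝ)) (𝓝 ((0:ℝ) ^ ((1:ℝ)/2))) :=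
        (Real.continuousAt_rpow_const 0 (1/2) (Or.inr (by norm_num))).tendsto
      have : Tendsto (fun x : ℝ => x ^ ((1:ℝ)/2)) (𝓝[>] 0) (𝓝 0) := by
        simpa [Real.zero_rpow (by norm_num : ((1:ℝ)/2) ≠ 0)] using hc.mono_left nhdsWithin_le_nhds
      simpa using this.const_mul (π^2)
    have hden0 : Tendsto (fun x : ℝ => x ^ ((1:ℝ)/2) * ((Real.log x)^2 + π^2)) (𝓝[>] 0) (𝓝 0) := by
      have := h1.add h2
      rw [add_zero] at this
      refine this.congr' ?_
      filter_upwards [self_mem_nhdsWithin] with x (hx : 0 < x)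
      have : x ^ ((1:ℝ)/4) * x ^ ((1:ℝ)/4) = x ^ ((1:ℝ)/2) := by
        rw [← Real.rpow_add hx]; norm_num
      ring_nf
      nlinarith [this, sq_nonneg (Real.log x), Real.rpow_pos_of_pos hx ((1:ℝ)/4)]
    have hden : Tendsto (fun x : ℝ => x ^ ((1:ℝ)/2) * ((Real.log x)^2 + π^2)) (𝓝[>] 0) (𝓝[>] 0) := by
      rw [tendsto_nhdsWithin_iff]
      refine ⟨hden0, ?_⟩
      filter_upwards [self_mem_nhdsWithin] with x (hx : 0 < x)
      have : (0:ℝ) < (Real.log x)^2 + π^2 := by positivity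
      exact mul_pos (Real.rpow_pos_of_pos hx _) this
    have hinv := hden.inv_tendsto_nhdsGT_zero
    have hnum : Tendsto (fun x : ℝ => π * (1 + x)) (𝓝[>] 0) (𝓝 π) := by
      have : Tendsto (fun x : ℝ => π * (1 + x)) (𝓝 (0:ℝ)) (𝓝 (π * (1 + 0))) :=
        (continuous_const.mul (continuous_const.add continuous_id)).tendsto 0
      simpa using this.mono_left nhdsWithin_le_nhds
    have := hnum.pos_mul_atTop hπ hinv
    refine this.congr' ?_
    filter_upwards [self_mem_nhdsWithin] with x (hx : 0 < x)
    simp only [Pi.inv_apply]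
    rw [ratio_eq hx]
    exact (div_eq_mul_inv _ _).symm
  · -- at ∞
    have hlo : (fun x : ℝ => (Real.log x)^2 + π^2) =o[atTop] fun x => x ^ ((1:ℝ)/2) := by
      have h1 : (fun x : ℝ => (Real.log x)^2) =o[atTop] fun x => x ^ ((1:ℝ)/2) := by
        have := isLittleO_log_rpow_rpow_atTop (s := 1/2) 2 (by norm_num)
        refine this.congr' ?_ EventuallyEq.rfl
        filter_upwards [eventually_ge_atTop (1:ℝ)] with x hx
        rw [show ((2:ℝ)) = ((2:ℕ):ℝ) by norm_num, Real.rpow_natCast]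
      have h2 : (fun _ : ℝ => π^2) =o[atTop] fun x => x ^ ((1:ℝ)/2) := by
        refine Asymptotics.isLittleO_const_left.mpr (Or.inr ?_)
        exact tendsto_abs_atTop_atTop.comp (tendsto_rpow_atTop (by norm_num))
      exact h1.add h2
    have hdiv : Tendsto (fun x : ℝ => ((Real.log x)^2 + π^2) / x ^ ((1:ℝ)/2)) atTop (𝓝[>] 0) := by
      rw [tendsto_nhdsWithin_iff]
      refine ⟨hlo.tendsto_div_nhds_zero, ?_⟩
      filter_upwards [eventually_gt_atTop (0:ℝ)] with x hx
      have hD : (0:ℝ) < (Real.log x)^2 + π^2 := by positivity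
      exact div_pos hD (Real.rpow_pos_of_pos hx _)
    have hinv := hdiv.inv_tendsto_nhdsGT_zero
    have hmul : Tendsto (fun x : ℝ => π * (((Real.log x)^2 + π^2) / x ^ ((1:ℝ)/2))⁻¹) atTop atTop :=
      hinv.const_mul_atTop hπ
    refine tendsto_atTop_mono' _ ?_ hmul
    filter_upwards [eventually_gt_atTop (0:ℝ)] with x hx
    have hD : (0:ℝ) < (Real.log x)^2 + π^2 := by positivity
    have hrp : (0:ℝ) < x ^ ((1:ℝ)/2) := Real.rpow_pos_of_pos hx _
    have hx2 : x ^ ((1:ℝ)/2) * x ^ ((1:ℝ)/2) = x := by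
      rw [← Real.rpow_add hx]; norm_num
    rw [ratio_eq hx, inv_div, mul_div_assoc']
    rw [div_le_div_iff₀ hD (mul_pos hrp hD)]
    nlinarith [hx2, mul_pos hπ hD]
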